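/- For n ≥ 4, a cycle C_n has the property that every k-subset of vertices is an identifying set if and only if n−1 ≤ k ≤ n. -/

import Mathlib

open Set
open Fin.NatCast Fin.CommRing

variable {V : Type*}

/-- The closed neighbourhood `N[x]` of a vertex. -/
def closedNbhd (G : SimpleGraph V) (x : V) : Set V :=
  insert x (G.neighborSet x)

/-- `C` is an identifying set: all sets `N[x] ∩ C` are nonempty and pairwise distinct. -/
def IsIdentifying (G : SimpleGraph V) (C : Set V) : Prop :=
  (∀ x : V, (closedNbhd G x ∩ C).Nonempty) ∧
    ∀ x y : V, closedNbhd G x ∩ C = closedNbhd G y ∩ C → x = y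

/-- Every `k`-subset of vertices is an identifying set. -/
def EveryKIdentifying (G : SimpleGraph V) (k : ℕ) : Prop :=
  ∀ C : Set V, C.ncard = k → IsIdentifying G C

section aux

variable {m : ℕ}

lemma fin_cast_ne_zero {j : ℕ} (hj0 : j ≠ 0) (hj : j < m + 4) :
    ((j : ℕ) : Fin (m + 4)) ≠ 0 := by
  intro h
  have hv := Fin.val_cast_of_lt (n := m + 4) hj
  rw [h] at hv
  simp at hv
  omega

lemma fin1 : (1 : Fin (m + 4)) ≠ 0 := by
  have := fin_cast_ne_zero (m := m) (j := 1) (by omega) (by omega)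
  simpa using this

lemma fin2 : (2 : Fin (m + 4)) ≠ 0 := by
  have := fin_cast_ne_zero (m := m) (j := 2) (by omega) (by omega)
  simpa using this

lemma fin3 : (3 : Fin (m + 4)) ≠ 0 := by
  have := fin_cast_ne_zero (m := m) (j := 3) (by omega) (by omega)
  simpa using this

lemma fin_ne_of (u v : Fin (m + 4)) (c : Fin (m + 4)) (hc : c ≠ 0) (h : u = v + c) :
    u ≠ v := by
  intro e
  rw [e] at h
  exact hc ((left_eq_add).mp h)

lemma cnbhd (x : Fin (m + 4)) :
    closedNbhd (SimpleGraph.cycleGraph (m + 4)) x = {x - 1, x, x + 1} := by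
  unfold closedNbhd
  rw [SimpleGraph.cycleGraph_neighborSet (n := m + 2)]
  ext z
  simp only [Set.mem_insert_iff, Set.mem_singleton_iff]
  tauto

lemma two_diff (x y : Fin (m + 4)) (hxy : x ≠ y) :
    ∃ a b : Fin (m + 4), a ≠ b ∧
      ((a ∈ closedNbhd (SimpleGraph.cycleGraph (m + 4)) x ∧
          a ∉ closedNbhd (SimpleGraph.cycleGraph (m + 4)) y) ∨
        (a ∈ closedNbhd (SimpleGraph.cycleGraph (m + 4)) y ∧
          a ∉ closedNbhd (SimpleGraph.cycleGraph (m + 4)) x)) ∧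
      ((b ∈ closedNbhd (SimpleGraph.cycleGraph (m + 4)) x ∧
          b ∉ closedNbhd (SimpleGraph.cycleGraph (m + 4)) y) ∨
        (b ∈ closedNbhd (SimpleGraph.cycleGraph (m + 4)) y ∧
          b ∉ closedNbhd (SimpleGraph.cycleGraph (m + 4)) x)) := by
  have h1 : (1 : Fin (m + 4)) ≠ 0 := fin1
  have h2 : (2 : Fin (m + 4)) ≠ 0 := fin2
  have h3 : (3 : Fin (m + 4)) ≠ 0 := fin3
  have hn1 : (-1 : Fin (m + 4)) ≠ 0 := neg_ne_zero.mpr h1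
  have hn2 : (-2 : Fin (m + 4)) ≠ 0 := neg_ne_zero.mpr h2
  have hn3 : (-3 : Fin (m + 4)) ≠ 0 := neg_ne_zero.mpr h3
  rw [cnbhd x, cnbhd y]
  simp only [Set.mem_insert_iff, Set.mem_singleton_iff]
  by_cases hy1 : y = x + 1
  · subst hy1
    refine ⟨x - 1, x + 2, ?_, ?_, ?_⟩
    · exact fin_ne_of _ _ (-3) hn3 (by ring)
    · left
      refine ⟨Or.inl rfl, ?_⟩
      push_neg
      refine ⟨?_, ?_, ?_⟩
      · exact fin_ne_of _ _ (-1) hn1 (by ring)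
      · exact fin_ne_of _ _ (-2) hn2 (by ring)
      · exact fin_ne_of _ _ (-3) hn3 (by ring)
    · right
      refine ⟨Or.inr (Or.inr (by ring)), ?_⟩
      push_neg
      refine ⟨?_, ?_, ?_⟩
      · exact fin_ne_of _ _ 3 h3 (by ring)
      · exact fin_ne_of _ _ 2 h2 (by ring)
      · exact fin_ne_of _ _ 1 h1 (by ring)
  · by_cases hy2 : y = x - 1
    · subst hy2
      refine ⟨x + 1, x - 2, ?_, ?_, ?_⟩
      · exact fin_ne_of _ _ 3 h3 (by ring)
      · left
        refine ⟨Or.inr (Or.inr rfl), ?_⟩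
        push_neg
        refine ⟨?_, ?_, ?_⟩
        · exact fin_ne_of _ _ 3 h3 (by ring)
        · exact fin_ne_of _ _ 2 h2 (by ring)
        · exact fin_ne_of _ _ 1 h1 (by ring)
      · right
        refine ⟨Or.inl (by ring), ?_⟩
        push_neg
        refine ⟨?_, ?_, ?_⟩
        · exact fin_ne_of _ _ (-1) hn1 (by ring)
        · exact fin_ne_of _ _ (-2) hn2 (by ring)
        · exact fin_ne_of _ _ (-3) hn3 (by ring)
    · refine ⟨x, y, hxy, ?_, ?_⟩
      · left
        refine ⟨Or.inr (Or.inl rfl), ?_⟩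
        push_neg
        refine ⟨?_, hxy, ?_⟩
        · intro h; exact hy1 (by rw [h]; ring)
        · intro h; exact hy2 (by rw [h]; ring)
      · right
        refine ⟨Or.inr (Or.inl rfl), ?_⟩
        push_neg
        exact ⟨hy2, fun h => hxy h.symm, hy1⟩

end aux

theorem stmt1 (n k : ℕ) (hn : 4 ≤ n) (hk : 1 ≤ k) (hkn : k ≤ n) :
    EveryKIdentifying (SimpleGraph.cycleGraph n) k ↔ (n - 1 ≤ k ∧ k ≤ n) := by
  obtain ⟨m, rfl⟩ : ∃ m, n = m + 4 := ⟨n - 4, by omega⟩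
  have h1 : (1 : Fin (m + 4)) ≠ 0 := fin1
  have h2 : (2 : Fin (m + 4)) ≠ 0 := fin2
  have h3 : (3 : Fin (m + 4)) ≠ 0 := fin3
  have hn1 : (-1 : Fin (m + 4)) ≠ 0 := neg_ne_zero.mpr h1
  have hn3 : (-3 : Fin (m + 4)) ≠ 0 := neg_ne_zero.mpr h3
  constructor
  · -- forward: if every k-set identifies, then m+3 ≤ k
    intro hE
    refine ⟨?_, hkn⟩
    by_contra hlt
    push_neg at hlt
    have hk2 : k ≤ m + 2 := by omega
    -- choose C of size k avoiding -1 and 2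
    have hne : (-1 : Fin (m + 4)) ≠ 2 := fin_ne_of _ _ (-3) hn3 (by ring)
    have hpair : ({-1, 2} : Set (Fin (m + 4))).ncard = 2 := Set.ncard_pair hne
    have hcompl : (({-1, 2} : Set (Fin (m + 4)))ᶜ).ncard = m + 2 := by
      have := Set.ncard_add_ncard_compl ({-1, 2} : Set (Fin (m + 4)))
      rw [hpair] at this
      simp [Nat.card_eq_fintype_card] at this
      omega
    obtain ⟨C, hCsub, hCcard⟩ :=
      Set.exists_subset_card_eq (s := (({-1, 2} : Set (Fin (m + 4)))ᶜ)) (hcompl ▸ hk2)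
    have hI := hE C hCcard
    have hm1 : (-1 : Fin (m + 4)) ∉ C := fun h => (hCsub h) (Or.inl rfl)
    have h2c : (2 : Fin (m + 4)) ∉ C := fun h => (hCsub h) (Or.inr rfl)
    have h01 : (0 : Fin (m + 4)) ≠ 1 := fin_ne_of _ _ (-1) hn1 (by ring)
    apply h01
    apply hI.2 0 1
    rw [cnbhd 0, cnbhd 1]
    have e1 : (0 : Fin (m + 4)) - 1 = -1 := by ring
    have e2 : (0 : Fin (m + 4)) + 1 = 1 := by ring
    have e3 : (1 : Fin (m + 4)) - 1 = 0 := by ring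
    have e4 : (1 : Fin (m + 4)) + 1 = 2 := by ring
    rw [e1, e2, e3, e4]
    ext z
    simp only [Set.mem_inter_iff, Set.mem_insert_iff, Set.mem_singleton_iff]
    constructor
    · rintro ⟨(rfl | rfl | rfl), hzC⟩
      · exact absurd hzC hm1
      · exact ⟨Or.inl rfl, hzC⟩
      · exact ⟨Or.inr (Or.inl rfl), hzC⟩
    · rintro ⟨(rfl | rfl | rfl), hzC⟩
      · exact ⟨Or.inr (Or.inl rfl), hzC⟩
      · exact ⟨Or.inr (Or.inr rfl), hzC⟩
      · exact absurd hzC h2c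
  · -- backward
    rintro ⟨hge, _⟩
    intro C hC
    have hkey : ∀ a b : Fin (m + 4), a ≠ b → a ∈ C ∨ b ∈ C := by
      intro a b hab
      by_contra hcon
      push_neg at hcon
      have hsub : ({a, b} : Set (Fin (m + 4))) ⊆ Cᶜ := by
        rintro z (rfl | rfl)
        · exact hcon.1
        · exact hcon.2
      have hle : ({a, b} : Set (Fin (m + 4))).ncard ≤ Cᶜ.ncard :=
        Set.ncard_le_ncard hsub (Set.toFinite _)
      rw [Set.ncard_pair hab] at hle
      have htot := Set.ncard_add_ncard_compl C
      rw [hC] at htot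
      simp [Nat.card_eq_fintype_card] at htot
      omega
    constructor
    · intro x
      rw [cnbhd x]
      have hne : x - 1 ≠ x + 1 := fin_ne_of _ _ (-2) (neg_ne_zero.mpr h2) (by ring)
      rcases hkey _ _ hne with h | h
      · exact ⟨x - 1, Or.inl rfl, h⟩
      · exact ⟨x + 1, Or.inr (Or.inr rfl), h⟩
    · intro x y hxy
      by_contra hne
      obtain ⟨a, b, hab, ha, hb⟩ := two_diff x y hne
      have core : ∀ z : Fin (m + 4), z ∈ C →
          ((z ∈ closedNbhd (SimpleGraph.cycleGraph (m + 4)) x ∧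
              z ∉ closedNbhd (SimpleGraph.cycleGraph (m + 4)) y) ∨
            (z ∈ closedNbhd (SimpleGraph.cycleGraph (m + 4)) y ∧
              z ∉ closedNbhd (SimpleGraph.cycleGraph (m + 4)) x)) → False := by
        rintro z hzC (⟨hzx, hzy⟩ | ⟨hzy, hzx⟩)
        · have : z ∈ closedNbhd (SimpleGraph.cycleGraph (m + 4)) y ∩ C := by
            rw [← hxy]; exact ⟨hzx, hzC⟩
          exact hzy this.1
        · have : z ∈ closedNbhd (SimpleGraph.cycleGraph (m + 4)) x ∩ C := by
            rw [hxy]; exact ⟨hzy, hzC⟩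
          exact hzx this.1
      rcases hkey a b hab with h | h
      · exact core a h ha
      · exact core b h hb
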